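/- Gumbel-max trick: let 𝒳 be a finite nonempty set, w : 𝒳 → (0,∞), and let (G_x)_{x∈𝒳} be independent standard Gumbel random variables. Then almost surely the function x ↦ log w(x) + G_x has a unique maximizer, and for every z ∈ 𝒳 the probability that z is this maximizer equals w(z) / Σ_{x∈𝒳} w(x). -/

import Mathlib

open scoped BigOperators
open MeasureTheory

/-- A standard Gumbel random variable: a measurable real-valued random variable with
cumulative distribution function `t ↦ exp(−exp(−t))`. -/
def IsStdGumbel {Ω : Type*} [MeasurableSpace Ω] (μ : Measure Ω) (g : Ω → ℝ) : Prop :=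
  Measurable g ∧ ∀ t : ℝ, (μ {ω | g ω ≤ t}).toReal = Real.exp (-Real.exp (-t))

open Real Set Filter Topology MeasureTheory
open scoped ENNReal

noncomputable section
namespace GumbelAux

lemma hasDerivAt_H (b : ℝ) (hb : 0 < b) (t : ℝ) :
    HasDerivAt (fun t => Real.exp (-b * Real.exp (-t)) / b)
      (Real.exp (-t - b * Real.exp (-t))) t := by
  have h2 : HasDerivAt (fun t : ℝ => Real.exp (-t)) (-Real.exp (-t)) t := by
    simpa using ((hasDerivAt_id t).neg).exp
  have h3 : HasDerivAt (fun t : ℝ => -b * Real.exp (-t)) (b * Real.exp (-t)) t := by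
    have := h2.const_mul (-b); simpa [mul_comm] using this
  have h4 := (h3.exp).div_const b
  refine h4.congr_deriv ?_
  symm
  have he : Real.exp (-t - b * Real.exp (-t))
      = Real.exp (-b * Real.exp (-t)) * Real.exp (-t) := by
    rw [← Real.exp_add]; ring_nf
  rw [he]
  field_simp

lemma tendsto_H_atTop (b : ℝ) (hb : 0 < b) :
    Tendsto (fun t => Real.exp (-b * Real.exp (-t)) / b) atTop (𝓝 (1 / b)) := by
  have h1 : Tendsto (fun t : ℝ => Real.exp (-t)) atTop (𝓝 0) :=
    Real.tendsto_exp_neg_atTop_nhds_zero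
  have h2 : Tendsto (fun t : ℝ => -b * Real.exp (-t)) atTop (𝓝 0) := by
    simpa using h1.const_mul (-b)
  have h3 := (Real.continuous_exp.tendsto 0).comp h2
  simpa using h3.div_const b

lemma tendsto_H_atBot (b : ℝ) (hb : 0 < b) :
    Tendsto (fun t => Real.exp (-b * Real.exp (-t)) / b) atBot (𝓝 0) := by
  have h1 : Tendsto (fun t : ℝ => Real.exp (-t)) atBot atTop :=
    Real.tendsto_exp_atTop.comp tendsto_neg_atBot_atTop
  have h2 : Tendsto (fun t : ℝ => -b * Real.exp (-t)) atBot atBot := by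
    exact (tendsto_const_mul_atBot_of_neg (neg_lt_zero.mpr hb)).2 h1
  have h3 := Real.tendsto_exp_atBot.comp h2
  simpa using h3.div_const b

section Integrals
variable (b : ℝ)

lemma cont_gum : Continuous (fun t : ℝ => Real.exp (-t - b * Real.exp (-t))) := by
  fun_prop

lemma intervalIntegral_gum (hb : 0 < b) (a x : ℝ) :
    ∫ t in a..x, Real.exp (-t - b * Real.exp (-t))
      = Real.exp (-b * Real.exp (-x)) / b - Real.exp (-b * Real.exp (-a)) / b := by
  refine intervalIntegral.integral_eq_sub_of_hasDerivAt (fun t _ => hasDerivAt_H b hb t) ?_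
  exact (cont_gum b).intervalIntegrable a x

lemma tendsto_intervalIntegral_gum_Iic (hb : 0 < b) (x : ℝ) :
    Tendsto (fun a => ∫ t in a..x, Real.exp (-t - b * Real.exp (-t))) atBot
      (𝓝 (Real.exp (-b * Real.exp (-x)) / b)) := by
  simp only [intervalIntegral_gum b hb]
  simpa using (tendsto_const_nhds.sub (tendsto_H_atBot b hb))

lemma integrableOn_gum_Iic (hb : 0 < b) (x : ℝ) :
    IntegrableOn (fun t : ℝ => Real.exp (-t - b * Real.exp (-t))) (Iic x) := by
  refine integrableOn_Iic_of_intervalIntegral_norm_tendsto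
    (Real.exp (-b * Real.exp (-x)) / b) x
    (fun a : ℝ => ((cont_gum b).integrableOn_Ioc)) tendsto_id ?_
  have : ∀ a : ℝ, (∫ t in a..x, ‖Real.exp (-t - b * Real.exp (-t))‖)
      = ∫ t in a..x, Real.exp (-t - b * Real.exp (-t)) := by
    intro a
    apply intervalIntegral.integral_congr
    intro t _
    exact Real.norm_of_nonneg (Real.exp_pos _).le
  simpa only [this, id_eq] using tendsto_intervalIntegral_gum_Iic b hb x

lemma integral_gum_Iic (hb : 0 < b) (x : ℝ) :
    ∫ t in Iic x, Real.exp (-t - b * Real.exp (-t))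
      = Real.exp (-b * Real.exp (-x)) / b :=
  tendsto_nhds_unique
    (intervalIntegral_tendsto_integral_Iic x (integrableOn_gum_Iic b hb x) tendsto_id)
    (tendsto_intervalIntegral_gum_Iic b hb x)

lemma integrable_gum (hb : 0 < b) :
    Integrable (fun t : ℝ => Real.exp (-t - b * Real.exp (-t))) := by
  refine integrable_of_intervalIntegral_norm_tendsto (1 / b)
    (fun i : ℝ => ((cont_gum b).integrableOn_Ioc)) (tendsto_neg_atTop_atBot) tendsto_id ?_
  have h1 : ∀ i : ℝ, (∫ t in (-i)..i, ‖Real.exp (-t - b * Real.exp (-t))‖)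
      = Real.exp (-b * Real.exp (-i)) / b - Real.exp (-b * Real.exp (-(-i))) / b := by
    intro i
    rw [← intervalIntegral_gum b hb]
    apply intervalIntegral.integral_congr
    intro t _
    exact Real.norm_of_nonneg (Real.exp_pos _).le
  simp only [id_eq]
  rw [funext h1]
  simpa using (tendsto_H_atTop b hb).sub
    ((tendsto_H_atBot b hb).comp tendsto_neg_atTop_atBot)

lemma integral_gum (hb : 0 < b) :
    ∫ t, Real.exp (-t - b * Real.exp (-t)) = 1 / b := by
  refine tendsto_nhds_unique
    (intervalIntegral_tendsto_integral (integrable_gum b hb)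
      tendsto_neg_atTop_atBot tendsto_id) ?_
  simp only [intervalIntegral_gum b hb]
  simpa using (tendsto_H_atTop b hb).sub
    ((tendsto_H_atBot b hb).comp tendsto_neg_atTop_atBot)

end Integrals


/-- A standard Gumbel random variable (duplicate of statement def, local). -/
def gumbelPDF (t : ℝ) : ℝ≥0∞ := ENNReal.ofReal (Real.exp (-t - Real.exp (-t)))

lemma measurable_gumbelPDF : Measurable gumbelPDF := by
  unfold gumbelPDF; fun_prop

def gumbelMeasure : Measure ℝ := MeasureTheory.volume.withDensity gumbelPDF

lemma gumbel_Iic (x : ℝ) :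
    gumbelMeasure (Iic x) = ENNReal.ofReal (Real.exp (-Real.exp (-x))) := by
  rw [gumbelMeasure, withDensity_apply _ measurableSet_Iic]
  have hint : IntegrableOn (fun t : ℝ => Real.exp (-t - 1 * Real.exp (-t))) (Iic x) :=
    integrableOn_gum_Iic 1 one_pos x
  simp only [one_mul] at hint
  rw [show (∫⁻ t in Iic x, gumbelPDF t)
      = ∫⁻ t in Iic x, ENNReal.ofReal (Real.exp (-t - Real.exp (-t))) from rfl,
    ← ofReal_integral_eq_lintegral_ofReal hint
      (Filter.Eventually.of_forall fun t => (Real.exp_pos _).le)]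
  have := integral_gum_Iic 1 one_pos x
  simp only [one_mul, one_div] at this
  rw [this]
  norm_num

instance : IsProbabilityMeasure gumbelMeasure := by
  constructor
  rw [gumbelMeasure, withDensity_apply _ MeasurableSet.univ, Measure.restrict_univ]
  have hint : Integrable (fun t : ℝ => Real.exp (-t - 1 * Real.exp (-t))) :=
    integrable_gum 1 one_pos
  simp only [one_mul] at hint
  rw [show (∫⁻ t, gumbelPDF t)
      = ∫⁻ t, ENNReal.ofReal (Real.exp (-t - Real.exp (-t))) from rfl,
    ← ofReal_integral_eq_lintegral_ofReal hint
      (Filter.Eventually.of_forall fun t => (Real.exp_pos _).le)]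
  have := integral_gum 1 one_pos
  simp only [one_mul] at this
  rw [this]
  norm_num

lemma gumbel_Iio (x : ℝ) :
    gumbelMeasure (Iio x) = ENNReal.ofReal (Real.exp (-Real.exp (-x))) := by
  have hsing : gumbelMeasure {x} = 0 :=
    (withDensity_absolutelyContinuous MeasureTheory.volume gumbelPDF)
      (Real.volume_singleton)
  have h : gumbelMeasure (Iic x) = gumbelMeasure (Iio x) + gumbelMeasure {x} := by
    rw [← Set.Iio_union_right, measure_union (by simp) (measurableSet_singleton x)]
  rw [← gumbel_Iic, h, hsing, add_zero]


lemma map_eq_gumbel {Ω : Type*} [MeasurableSpace Ω] (μ : Measure Ω) [IsProbabilityMeasure μ]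
    {g : Ω → ℝ} (hg : IsStdGumbel μ g) : Measure.map g μ = gumbelMeasure := by
  have hm := hg.1
  have : IsProbabilityMeasure (Measure.map g μ) := Measure.isProbabilityMeasure_map hm.aemeasurable
  refine MeasureTheory.Measure.ext_of_Iic (Measure.map g μ) gumbelMeasure (fun x => ?_)
  rw [Measure.map_apply hm measurableSet_Iic, gumbel_Iic]
  have h2 := hg.2 x
  have hp : g ⁻¹' Iic x = {ω | g ω ≤ x} := rfl
  rw [hp, ← h2, ENNReal.ofReal_toReal (measure_ne_top μ _)]

lemma map_joint_eq_pi {X Ω : Type*} [Fintype X] [MeasurableSpace Ω]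
    (μ : Measure Ω) [IsProbabilityMeasure μ] (G : X → Ω → ℝ)
    (hG : ∀ x, IsStdGumbel μ (G x))
    (hindep : ProbabilityTheory.iIndepFun (m := fun _ : X => (inferInstance : MeasurableSpace ℝ))
      G μ) :
    Measure.map (fun ω x => G x ω) μ = Measure.pi (fun _ : X => gumbelMeasure) := by
  refine (Measure.pi_eq fun s hs => ?_).symm
  rw [Measure.map_apply (measurable_pi_lambda _ fun x => (hG x).1)
    (MeasurableSet.univ_pi hs)]
  have hpre : (fun ω x => G x ω) ⁻¹' (univ.pi s) = ⋂ x ∈ Finset.univ, G x ⁻¹' s x := by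
    ext ω; simp [Set.mem_pi]
  rw [hpre, hindep.measure_inter_preimage_eq_mul Finset.univ (fun i _ => hs i)]
  refine Finset.prod_congr rfl fun x _ => ?_
  rw [← Measure.map_apply (hG x).1 (hs x), map_eq_gumbel μ (hG x)]

lemma lintegral_eval_pi {ι : Type*} [Fintype ι] [Subsingleton ι] (i : ι)
    (Φ : ℝ → ℝ≥0∞) (hΦ : Measurable Φ) :
    ∫⁻ a : ι → ℝ, Φ (a i) ∂(Measure.pi fun _ : ι => gumbelMeasure)
      = ∫⁻ t, Φ t ∂gumbelMeasure := by
  have hmapeq : Measure.map (fun a : ι → ℝ => a i)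
      (Measure.pi fun _ : ι => gumbelMeasure) = gumbelMeasure := by
    refine Measure.ext fun s hs => ?_
    rw [Measure.map_apply (measurable_pi_apply i) hs]
    have hpre : ((fun a : ι → ℝ => a i) ⁻¹' s) = univ.pi fun _ : ι => s := by
      ext a
      constructor
      · intro h j _
        rwa [Subsingleton.elim j i]
      · intro h; exact h i (Set.mem_univ _)
    rw [hpre, Measure.pi_pi]
    exact Fintype.prod_subsingleton _ i
  conv_rhs => rw [← hmapeq]
  rw [lintegral_map hΦ (measurable_pi_apply i)]

lemma pi_measure_event {X : Type*} [Fintype X] (w : X → ℝ) (hw : ∀ x, 0 < w x) (z : X) :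
    (Measure.pi (fun _ : X => gumbelMeasure))
      {f : X → ℝ | ∀ x, x ≠ z → Real.log (w x) + f x < Real.log (w z) + f z}
      = ENNReal.ofReal (w z / ∑ x, w x) := by
  classical
  let p : X → Prop := fun x => x = z
  haveI hU : Unique {x : X // p x} := ⟨⟨⟨z, rfl⟩⟩, fun a => Subtype.ext a.2⟩
  set c : ℝ := ∑ x : {x : X // ¬ p x}, w x.1 / w z with hc
  have hc0 : 0 ≤ c := Finset.sum_nonneg fun x _ => div_nonneg (hw x.1).le (hw z).le
  have hb : (0:ℝ) < 1 + c := by linarith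
  set T : Set (({x : X // p x} → ℝ) × ({x : X // ¬ p x} → ℝ)) :=
    {q | ∀ x : {x : X // ¬ p x},
      Real.log (w x.1) + q.2 x < Real.log (w z) + q.1 ⟨z, rfl⟩} with hT
  have hTmeas : MeasurableSet T := by
    have hTeq : T = ⋂ x : {x : X // ¬ p x},
        {q : ({x : X // p x} → ℝ) × ({x : X // ¬ p x} → ℝ) |
          Real.log (w x.1) + q.2 x < Real.log (w z) + q.1 ⟨z, rfl⟩} := by
      ext q; simp [hT]
    rw [hTeq]
    refine MeasurableSet.iInter fun x => ?_
    exact measurableSet_lt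
      (measurable_const.add (measurable_snd.eval))
      (measurable_const.add (measurable_fst.eval))
  have hSpre : {f : X → ℝ | ∀ x, x ≠ z → Real.log (w x) + f x < Real.log (w z) + f z}
      = (MeasurableEquiv.piEquivPiSubtypeProd (fun _ : X => ℝ) p) ⁻¹' T := by
    ext f
    simp only [Set.mem_setOf_eq, Set.mem_preimage, MeasurableEquiv.piEquivPiSubtypeProd,
      Equiv.piEquivPiSubtypeProd, MeasurableEquiv.coe_mk, Equiv.coe_fn_mk, hT]
    constructor
    · intro h x; exact h x.1 x.2
    · intro h x hx; exact h ⟨x, hx⟩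
  rw [hSpre,
    (measurePreserving_piEquivPiSubtypeProd (fun _ : X => gumbelMeasure) p).measure_preimage
      hTmeas.nullMeasurableSet,
    Measure.prod_apply hTmeas]
  have hslice : ∀ a : {x : X // p x} → ℝ,
      (Measure.pi fun _ : {x : X // ¬ p x} => gumbelMeasure) (Prod.mk a ⁻¹' T)
        = ENNReal.ofReal (Real.exp (-(c * Real.exp (-(a ⟨z, rfl⟩))))) := by
    intro a
    have h1 : Prod.mk a ⁻¹' T = univ.pi fun x : {x : X // ¬ p x} =>
        Iio (Real.log (w z) + a ⟨z, rfl⟩ - Real.log (w x.1)) := by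
      ext g
      simp only [Set.mem_preimage, Set.mem_setOf_eq, hT, Set.mem_pi, Set.mem_univ,
        forall_true_left, Set.mem_Iio, true_implies]
      constructor
      · intro h x; have := h x; linarith
      · intro h x; have := h x; linarith
    rw [h1, Measure.pi_pi]
    have h2 : ∀ x : {x : X // ¬ p x},
        gumbelMeasure (Iio (Real.log (w z) + a ⟨z, rfl⟩ - Real.log (w x.1)))
          = ENNReal.ofReal (Real.exp (-(w x.1 / w z * Real.exp (-(a ⟨z, rfl⟩))))) := by
      intro x
      have he : Real.exp (-(Real.log (w z) + a ⟨z, rfl⟩ - Real.log (w x.1)))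
          = w x.1 / w z * Real.exp (-(a ⟨z, rfl⟩)) := by
        rw [show -(Real.log (w z) + a ⟨z, rfl⟩ - Real.log (w x.1))
            = (Real.log (w x.1) - Real.log (w z)) + -(a ⟨z, rfl⟩) by ring,
          Real.exp_add, Real.exp_sub, Real.exp_log (hw x.1), Real.exp_log (hw z)]
      rw [gumbel_Iio, he]
    simp only [h2]
    rw [← ENNReal.ofReal_prod_of_nonneg (fun x _ => (Real.exp_pos _).le),
      ← Real.exp_sum]
    congr 2
    rw [hc, Finset.sum_mul]
    rw [Finset.sum_neg_distrib]
  simp only [hslice]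
  have hmeasΦ : Measurable fun t : ℝ => ENNReal.ofReal (Real.exp (-(c * Real.exp (-t)))) := by
    fun_prop
  haveI : Subsingleton {x : X // p x} := ⟨fun a b => Subtype.ext (a.2.trans b.2.symm)⟩
  have hev := @lintegral_eval_pi {x : X // p x} (Subtype.fintype p) inferInstance
    (⟨z, rfl⟩ : {x : X // p x})
    (fun t => ENNReal.ofReal (Real.exp (-(c * Real.exp (-t))))) hmeasΦ
  refine Eq.trans hev ?_
  rw [gumbelMeasure, lintegral_withDensity_eq_lintegral_mul _ measurable_gumbelPDF hmeasΦ]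
  have hprod : ∀ t : ℝ, (gumbelPDF * fun t => ENNReal.ofReal (Real.exp (-(c * Real.exp (-t))))) t
      = ENNReal.ofReal (Real.exp (-t - (1 + c) * Real.exp (-t))) := by
    intro t
    simp only [Pi.mul_apply, gumbelPDF, ← ENNReal.ofReal_mul (Real.exp_pos _).le,
      ← Real.exp_add]
    congr 1
    ring
  simp only [hprod]
  rw [← ofReal_integral_eq_lintegral_ofReal (integrable_gum (1 + c) hb)
      (Filter.Eventually.of_forall fun t => (Real.exp_pos _).le),
    integral_gum (1 + c) hb]
  congr 1
  have hsum : ∑ x : {x : X // ¬ p x}, w x.1 = (∑ x, w x) - w z := by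
    rw [← Finset.sum_erase_eq_sub (Finset.mem_univ z)]
    exact (Finset.sum_subtype (Finset.univ.erase z) (fun x => by simp [p]) w).symm
  have hcval : c = ((∑ x, w x) - w z) / w z := by
    rw [hc, ← Finset.sum_div, hsum]
  have hwz : w z ≠ 0 := (hw z).ne'
  have hS : (0:ℝ) < ∑ x, w x := Finset.sum_pos (fun x _ => hw x) ⟨z, Finset.mem_univ z⟩
  rw [hcval]
  field_simp
  rw [add_sub_cancel, div_self hS.ne']

end GumbelAux

/-- **Gumbel-max trick:** with independent standard Gumbel perturbations, almost surely
`x ↦ log w(x) + G_x` has a unique maximizer, and each `z` is this maximizer with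
probability `w(z) / Σₓ w(x)`. -/
theorem gumbel_max_trick {X Ω : Type*} [Fintype X] [Nonempty X]
    [MeasurableSpace Ω] (μ : Measure Ω) [IsProbabilityMeasure μ]
    (w : X → ℝ) (hw : ∀ x, 0 < w x)
    (G : X → Ω → ℝ)
    (hG : ∀ x, IsStdGumbel μ (G x))
    (hindep : ProbabilityTheory.iIndepFun (m := fun _ : X => (inferInstance : MeasurableSpace ℝ))
      G μ) :
    μ {ω | ∃! z : X, ∀ x, x ≠ z →
        Real.log (w x) + G x ω < Real.log (w z) + G z ω} = 1 ∧
    ∀ z : X,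
      (μ {ω | ∀ x, x ≠ z →
          Real.log (w x) + G x ω < Real.log (w z) + G z ω}).toReal
        = w z / ∑ x, w x := by
  classical
  have hGm : ∀ x, Measurable (G x) := fun x => (hG x).1
  set A : X → Set Ω := fun z =>
    {ω | ∀ x, x ≠ z → Real.log (w x) + G x ω < Real.log (w z) + G z ω} with hA
  have hmap := GumbelAux.map_joint_eq_pi μ G hG hindep
  have hmeasS : ∀ z : X, MeasurableSet
      {f : X → ℝ | ∀ x, x ≠ z → Real.log (w x) + f x < Real.log (w z) + f z} := by
    intro z
    have hseq : {f : X → ℝ | ∀ x, x ≠ z → Real.log (w x) + f x < Real.log (w z) + f z}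
        = ⋂ x, ⋂ (_ : x ≠ z), {f : X → ℝ | Real.log (w x) + f x < Real.log (w z) + f z} := by
      ext f; simp
    rw [hseq]
    refine MeasurableSet.iInter fun x => MeasurableSet.iInter fun _ => ?_
    exact measurableSet_lt (measurable_const.add (measurable_pi_apply x))
      (measurable_const.add (measurable_pi_apply z))
  have hApre : ∀ z : X, A z = (fun ω x => G x ω) ⁻¹'
      {f : X → ℝ | ∀ x, x ≠ z → Real.log (w x) + f x < Real.log (w z) + f z} := fun z => rfl
  have hAz : ∀ z, μ (A z) = ENNReal.ofReal (w z / ∑ x, w x) := by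
    intro z
    rw [hApre z, ← Measure.map_apply (measurable_pi_lambda _ hGm) (hmeasS z), hmap,
      GumbelAux.pi_measure_event w hw z]
  have hAmeas : ∀ z, MeasurableSet (A z) := fun z => by
    rw [hApre z]
    exact (measurable_pi_lambda _ hGm) (hmeasS z)
  have hS : (0:ℝ) < ∑ x, w x :=
    Finset.sum_pos (fun x _ => hw x) Finset.univ_nonempty
  have part2 : ∀ z, (μ (A z)).toReal = w z / ∑ x, w x := by
    intro z
    rw [hAz z, ENNReal.toReal_ofReal (div_nonneg (hw z).le hS.le)]
  refine ⟨?_, part2⟩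
  have hset : {ω | ∃! z : X, ∀ x, x ≠ z →
      Real.log (w x) + G x ω < Real.log (w z) + G z ω} = ⋃ z, A z := by
    ext ω
    simp only [Set.mem_setOf_eq, Set.mem_iUnion]
    constructor
    · rintro ⟨z, hz, -⟩
      exact ⟨z, hz⟩
    · rintro ⟨z, hz⟩
      refine ⟨z, hz, fun y hy => ?_⟩
      by_contra hne
      have h1 := hz y hne
      have h2 := hy z (fun h => hne h.symm)
      linarith
  have hdisj : Pairwise (Function.onFun Disjoint A) := by
    intro i j hij
    rw [Function.onFun, Set.disjoint_left]
    intro ω hi hj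
    have h1 := hi j (Ne.symm hij)
    have h2 := hj i hij
    linarith
  rw [hset, measure_iUnion hdisj hAmeas, tsum_fintype]
  simp only [hAz]
  rw [← ENNReal.ofReal_sum_of_nonneg (fun z _ => div_nonneg (hw z).le hS.le),
    ← Finset.sum_div, div_self hS.ne']
  exact ENNReal.ofReal_one
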